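/- Let (X, d, m) be a uniformly locally doubling metric measure space, f ∈ BV_loc(X), and G_f = {(x,t) ∈ X × ℝ : t < f(x)}. If f^∧(x) < t < f^∨(x), then (x, t) belongs to the essential boundary ∂*G_f of the subgraph in X × ℝ (with product metric and measure m ⊗ L^1). -/

import Mathlib

open MeasureTheory Metric Filter
open scoped ENNReal NNReal

/-- The (upper) pointwise Lipschitz slope `lip f (x)`. -/
noncomputable def lipSlope {X : Type*} [MetricSpace X] (f : X → ℝ) (x : X) : ℝ≥0∞ :=
  Filter.limsup (fun y => ENNReal.ofReal (|f x - f y| / dist x y)) (nhdsWithin x {x}ᶜ)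

/-- The relaxed total variation `|Df|(Ω)`: the infimum, over sequences of locally Lipschitz
functions on `Ω` converging to `f` in `L¹_loc(Ω)`, of the liminf of `∫_Ω lip fᵢ dμ`. -/
noncomputable def relaxedTV {X : Type*} [MetricSpace X] [MeasurableSpace X]
    (μ : Measure X) (f : X → ℝ) (Ω : Set X) : ℝ≥0∞ :=
  ⨅ (F : ℕ → X → ℝ)
    (_ : (∀ i, ∀ x ∈ Ω, ∃ s ∈ nhdsWithin x Ω, ∃ C : ℝ≥0, LipschitzOnWith C (F i) s) ∧
      ∀ K : Set X, IsCompact K → K ⊆ Ω →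
        Tendsto (fun i => ∫⁻ x in K, ENNReal.ofReal |F i x - f x| ∂μ) atTop (nhds 0)),
    Filter.liminf (fun i => ∫⁻ x in Ω, lipSlope (F i) x ∂μ) atTop

/-- `f` has locally bounded variation on the metric measure space `(X, d, μ)`. -/
def BVlocM {X : Type*} [MetricSpace X] [MeasurableSpace X]
    (μ : Measure X) (f : X → ℝ) : Prop :=
  LocallyIntegrable f μ ∧
    ∀ Ω : Set X, IsOpen Ω → Bornology.IsBounded Ω → relaxedTV μ f Ω < ⊤
/-- The approximate lower limit `f^∧(x)` of `f` at `x`. -/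
noncomputable def apLower {X : Type*} [MetricSpace X] [MeasurableSpace X]
    (μ : Measure X) (f : X → ℝ) (x : X) : EReal :=
  sSup {t : EReal | Tendsto (fun r => μ (ball x r ∩ {y | (f y : EReal) < t}) / μ (ball x r))
    (nhdsWithin (0 : ℝ) (Set.Ioi 0)) (nhds 0)}

/-- The approximate upper limit `f^∨(x)` of `f` at `x`. -/
noncomputable def apUpper {X : Type*} [MetricSpace X] [MeasurableSpace X]
    (μ : Measure X) (f : X → ℝ) (x : X) : EReal :=
  sInf {t : EReal | Tendsto (fun r => μ (ball x r ∩ {y | (t : EReal) < f y}) / μ (ball x r))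
    (nhdsWithin (0 : ℝ) (Set.Ioi 0)) (nhds 0)}

/-- The approximate jump set of `f`. -/
def jumpSet {X : Type*} [MetricSpace X] [MeasurableSpace X]
    (μ : Measure X) (f : X → ℝ) : Set X :=
  {x | apLower μ f x < apUpper μ f x}

/-- The precise representative `f̄ = (f^∧ + f^∨)/2` of `f` (with junk value conventions
at points where an approximate limit is infinite). -/
noncomputable def preciseRep {X : Type*} [MetricSpace X] [MeasurableSpace X]
    (μ : Measure X) (f : X → ℝ) (x : X) : ℝ :=
  ((apLower μ f x).toReal + (apUpper μ f x).toReal) / 2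

/-- The essential boundary of `E`: the set of points where neither `E` nor its
complement has upper density zero. -/
def essBoundary {X : Type*} [MetricSpace X] [MeasurableSpace X]
    (μ : Measure X) (E : Set X) : Set X :=
  {x | 0 < Filter.limsup (fun r => μ (ball x r ∩ E) / μ (ball x r))
          (nhdsWithin (0 : ℝ) (Set.Ioi 0)) ∧
       0 < Filter.limsup (fun r => μ (ball x r \ E) / μ (ball x r))
          (nhdsWithin (0 : ℝ) (Set.Ioi 0))}
/-- Uniformly locally doubling measure. -/
def UnifLocDoubling {X : Type*} [MetricSpace X] [MeasurableSpace X] (μ : MeasureTheory.Measure X) : Prop :=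
  ∀ R : ℝ, 0 < R → ∃ C : ℝ≥0, ∀ (x : X) (r : ℝ), 0 < r → r < R →
    μ (Metric.ball x (2 * r)) ≤ C * μ (Metric.ball x r)


lemma stmt9_aux {X : Type*} [MetricSpace X] [MeasurableSpace X]
    (μ : Measure X) (x : X) (t : ℝ) (A : Set X) (E : Set (X × ℝ)) (δ : ℝ) (hδ : 0 < δ)
    (hsub : ∀ r : ℝ, 0 < r → r < δ →
      (ball x r ∩ A) ×ˢ ball t r ⊆ ball (x, t) r ∩ E)
    (hA : ¬ Tendsto (fun r => μ (ball x r ∩ A) / μ (ball x r))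
      (nhdsWithin (0 : ℝ) (Set.Ioi 0)) (nhds 0)) :
    0 < Filter.limsup
      (fun r => (μ.prod volume) (ball (x, t) r ∩ E) / (μ.prod volume) (ball (x, t) r))
      (nhdsWithin (0 : ℝ) (Set.Ioi 0)) := by
  set l := nhdsWithin (0 : ℝ) (Set.Ioi 0)
  set φ : ℝ → ℝ≥0∞ := fun r => μ (ball x r ∩ A) / μ (ball x r) with hφ
  have hlim : 0 < Filter.limsup φ l := by
    rcases eq_or_lt_of_le (zero_le : 0 ≤ Filter.limsup φ l) with h | h
    · exact absurd (tendsto_of_le_liminf_of_limsup_le zero_le h.symm.le) hA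
    · exact h
  refine lt_of_lt_of_le hlim (Filter.limsup_le_limsup ?_)
  have hmem : Set.Ioo (0 : ℝ) δ ∈ l := by
    have : Set.Ioo (0 : ℝ) δ ∈ nhdsWithin (0 : ℝ) (Set.Ioi 0) :=
      Ioo_mem_nhdsGT_of_mem ⟨le_refl _, hδ⟩
    exact this
  filter_upwards [hmem] with r hr
  obtain ⟨hr0, hrδ⟩ := hr
  have hball : ball (x, t) r = ball x r ×ˢ ball t r := (ball_prod_same x t r).symm
  have hden : (μ.prod volume) (ball (x, t) r) = μ (ball x r) * ENNReal.ofReal (2 * r) := by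
    rw [hball, Measure.prod_prod, Real.volume_ball]
  have hnum : μ (ball x r ∩ A) * ENNReal.ofReal (2 * r) ≤
      (μ.prod volume) (ball (x, t) r ∩ E) := by
    calc μ (ball x r ∩ A) * ENNReal.ofReal (2 * r)
        = (μ.prod volume) ((ball x r ∩ A) ×ˢ ball t r) := by
          rw [Measure.prod_prod, Real.volume_ball]
      _ ≤ (μ.prod volume) (ball (x, t) r ∩ E) := measure_mono (hsub r hr0 hrδ)
  have hc0 : ENNReal.ofReal (2 * r) ≠ 0 := by
    simp [ENNReal.ofReal_eq_zero]; linarith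
  calc φ r = (μ (ball x r ∩ A) * ENNReal.ofReal (2 * r)) /
        (μ (ball x r) * ENNReal.ofReal (2 * r)) := by
        rw [ENNReal.mul_div_mul_right _ _ hc0 ENNReal.ofReal_ne_top]
    _ ≤ (μ.prod volume) (ball (x, t) r ∩ E) / (μ.prod volume) (ball (x, t) r) := by
        rw [hden]; exact ENNReal.div_le_div_right hnum _

/-- Let `(X, d, μ)` be uniformly locally doubling and `f ∈ BV_loc(X)`.
If `f^∧(x) < t < f^∨(x)`, then `(x,t)` belongs to the essential boundary of the subgraph
`G_f ⊆ X × ℝ` (with the product metric and measure `μ ⊗ L¹`). -/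
theorem stmt9 {X : Type*} [MetricSpace X] [MeasurableSpace X] [BorelSpace X]
    (μ : Measure X) [SigmaFinite μ] (hμ : UnifLocDoubling μ)
    (f : X → ℝ) (hf : BVlocM μ f) (x : X) (t : ℝ)
    (h1 : apLower μ f x < (t : EReal)) (h2 : (t : EReal) < apUpper μ f x) :
    (x, t) ∈ essBoundary (μ.prod volume) {p : X × ℝ | p.2 < f p.1} := by
  obtain ⟨s, hs1, hs2⟩ := EReal.exists_between_coe_real h1
  obtain ⟨s', hs'1, hs'2⟩ := EReal.exists_between_coe_real h2
  have hst : s < t := by exact_mod_cast hs2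
  have hts' : t < s' := by exact_mod_cast hs'1
  constructor
  · -- upper density of G positive, via A = {s' < f}
    refine stmt9_aux μ x t {y | s' < f y} _ (s' - t) (by linarith) ?_ ?_
    · rintro r hr0 hrδ ⟨y, u⟩ ⟨⟨hy, hfy⟩, hu⟩
      refine ⟨?_, ?_⟩
      · rw [← ball_prod_same]; exact ⟨hy, hu⟩
      · have : |u - t| < r := by simpa [Real.dist_eq] using hu
        have : u < t + r := by cases abs_lt.mp this; linarith
        show u < f y
        have : s' < f y := hfy
        linarith
    · intro hT
      have hmem : (s' : EReal) ∈ {t : EReal | Tendsto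
          (fun r => μ (ball x r ∩ {y | (t : EReal) < f y}) / μ (ball x r))
          (nhdsWithin (0 : ℝ) (Set.Ioi 0)) (nhds 0)} := by
        have : {y | (s' : EReal) < (f y : EReal)} = {y | s' < f y} := by
          ext y; simp [EReal.coe_lt_coe_iff]
        simpa [this] using hT
      exact absurd (sInf_le hmem) (not_le.mpr hs'2)
  · -- upper density of complement positive, via A = {f < s}
    have hdiff : ∀ r : ℝ, ball (x, t) r \ {p : X × ℝ | p.2 < f p.1} =
        ball (x, t) r ∩ {p : X × ℝ | p.2 < f p.1}ᶜ := fun r => Set.diff_eq _ _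
    simp only [hdiff]
    refine stmt9_aux μ x t {y | f y < s} _ (t - s) (by linarith) ?_ ?_
    · rintro r hr0 hrδ ⟨y, u⟩ ⟨⟨hy, hfy⟩, hu⟩
      refine ⟨?_, ?_⟩
      · rw [← ball_prod_same]; exact ⟨hy, hu⟩
      · have : |u - t| < r := by simpa [Real.dist_eq] using hu
        have : t - r < u := by cases abs_lt.mp this; linarith
        show ¬ u < f y
        have : f y < s := hfy
        push_neg
        linarith
    · intro hT
      have hmem : (s : EReal) ∈ {t : EReal | Tendsto
          (fun r => μ (ball x r ∩ {y | (f y : EReal) < t}) / μ (ball x r))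
          (nhdsWithin (0 : ℝ) (Set.Ioi 0)) (nhds 0)} := by
        have : {y | (f y : EReal) < (s : EReal)} = {y | f y < s} := by
          ext y; simp [EReal.coe_lt_coe_iff]
        simpa [this] using hT
      exact absurd (le_sSup hmem) (not_le.mpr hs1)
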